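/- Let G be a finite simple chordal graph such that its clique complex Δ(G) is a matroid complex, i.e., for every subset S of V(G) the subcomplex of Δ(G) induced on V(G)∖S is pure. Then G is a threshold graph. -/

import Mathlib

open Finset

/-- `G` is chordal: every cycle of length at least 4 has a chord, i.e. an edge
joining two non-consecutive vertices of the cycle. -/
def IsChordal {V : Type*} (G : SimpleGraph V) : Prop :=
  ∀ (n : ℕ), 4 ≤ n → ∀ f : ZMod n → V, Function.Injective f →
    (∀ i : ZMod n, G.Adj (f i) (f (i + 1))) →
    ∃ i j : ZMod n, i ≠ j ∧ i + 1 ≠ j ∧ j + 1 ≠ i ∧ G.Adj (f i) (f j)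

/-- The number of cliques of `G` with exactly `i` vertices. -/
noncomputable def cliqueCount {V : Type*} [Fintype V] (G : SimpleGraph V) (i : ℕ) : ℕ :=
  {s : Finset V | G.IsNClique i s}.ncard

/-- `W(G - Y)`: the number of connected components of the subgraph of `G` induced on the
complement of `Y`. -/
noncomputable def numComponents {V : Type*} [Fintype V] [DecidableEq V] (G : SimpleGraph V)
    (Y : Finset V) : ℕ :=
  Nat.card (G.induce (↑(Yᶜ) : Set V)).ConnectedComponent

/-- A vertex-cut of `G`: a set of vertices whose removal disconnects `G`. -/
def IsVertexCut {V : Type*} [Fintype V] [DecidableEq V] (G : SimpleGraph V) (Y : Finset V) :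
    Prop :=
  ¬ (G.induce (↑(Yᶜ) : Set V)).Connected

/-- The vertex connectivity `κ(G)`: the minimum cardinality of a vertex-cut. -/
noncomputable def vertexConnectivity {V : Type*} [Fintype V] [DecidableEq V]
    (G : SimpleGraph V) : ℕ :=
  sInf {k | ∃ Y : Finset V, IsVertexCut G Y ∧ Y.card = k}

/-- `s` is a maximal clique of `G`. -/
def IsMaxCliqueOf {V : Type*} (G : SimpleGraph V) (s : Finset V) : Prop :=
  G.IsClique (↑s : Set V) ∧ ∀ t : Finset V, G.IsClique (↑t : Set V) → s ⊆ t → s = t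

/-- A dominating `i`-clique of `G`: a set of `i`-cliques such that every maximal clique of
order at least `i` contains some member of the set. -/
def IsDominatingCliqueSet {V : Type*} (G : SimpleGraph V) (i : ℕ)
    (D : Finset (Finset V)) : Prop :=
  (∀ s ∈ D, G.IsNClique i s) ∧
    ∀ t : Finset V, IsMaxCliqueOf G t → i ≤ t.card → ∃ s ∈ D, s ⊆ t

/-- `d_i(G)`: the minimum cardinality of a dominating `i`-clique of `G`. -/
noncomputable def domNum {V : Type*} (G : SimpleGraph V) (i : ℕ) : ℕ :=
  sInf {k | ∃ D : Finset (Finset V), IsDominatingCliqueSet G i D ∧ D.card = k}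

/-- `κ̃(G)`: the maximum cardinality of the intersection of a pair of distinct maximal
cliques of `G`. -/
noncomputable def kappaTilde {V : Type*} [DecidableEq V] (G : SimpleGraph V) : ℕ :=
  sSup {k | ∃ C C' : Finset V, IsMaxCliqueOf G C ∧ IsMaxCliqueOf G C' ∧ C ≠ C' ∧
    (C ∩ C').card = k}

/-- `G` restricted to the vertex set `s` is a threshold graph: it can be built from a
one-vertex graph by repeatedly adding either an isolated vertex or a vertex adjacent to
all existing vertices. -/
inductive IsThresholdOn {V : Type*} [DecidableEq V] (G : SimpleGraph V) : Finset V → Prop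
  | single (v : V) : IsThresholdOn G {v}
  | isolated (s : Finset V) (v : V) (hv : v ∉ s) (hs : IsThresholdOn G s)
      (hiso : ∀ u ∈ s, ¬ G.Adj v u) : IsThresholdOn G (insert v s)
  | dominating (s : Finset V) (v : V) (hv : v ∉ s) (hs : IsThresholdOn G s)
      (hdom : ∀ u ∈ s, G.Adj v u) : IsThresholdOn G (insert v s)

/-- `G` is a threshold graph. -/
def IsThreshold {V : Type*} [Fintype V] [DecidableEq V] (G : SimpleGraph V) : Prop :=
  IsThresholdOn G Finset.univ

/-- `|C_i(G)|`: the number of maximal cliques of `G` with exactly `i` vertices. -/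
noncomputable def maxCliqueCount {V : Type*} [Fintype V] (G : SimpleGraph V) (i : ℕ) : ℕ :=
  {s : Finset V | IsMaxCliqueOf G s ∧ s.card = i}.ncard

/-- `s` is a maximal clique of `G` among the cliques contained in `W`, i.e. a facet of the
restriction of the clique complex of `G` to `W`. -/
def IsMaxCliqueWithin {V : Type*} (G : SimpleGraph V) (W : Finset V) (s : Finset V) : Prop :=
  s ⊆ W ∧ G.IsClique (↑s : Set V) ∧
    ∀ t : Finset V, t ⊆ W → G.IsClique (↑t : Set V) → s ⊆ t → s = t

/-- The restriction of the clique complex of `G` to `W` is pure: all its facets have the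
same cardinality. -/
def PureOn {V : Type*} (G : SimpleGraph V) (W : Finset V) : Prop :=
  ∀ s t : Finset V, IsMaxCliqueWithin G W s → IsMaxCliqueWithin G W t → s.card = t.card


section Aux
variable {V : Type} [DecidableEq V] (G : SimpleGraph V)

private lemma c4_aux (hch : IsChordal G) (v w u u' : V)
    (hvw : v ≠ w) (hvu : v ≠ u) (hvu' : v ≠ u') (hwu : w ≠ u) (hwu' : w ≠ u') (huu' : u ≠ u')
    (e1 : G.Adj v w) (e2 : G.Adj w u) (e3 : G.Adj u u') (e4 : G.Adj u' v)
    (n1 : ¬ G.Adj v u) (n2 : ¬ G.Adj w u') : False := by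
  have := hch 4 (le_refl 4) (fun i : ZMod 4 => ![v, w, u, u'] i) ?_ ?_
  · obtain ⟨i, j, hij, hij1, hji1, hadj⟩ := this
    fin_cases i <;> fin_cases j <;>
      simp_all [show ((3:ZMod 4)+1) = 0 from by decide, Matrix.cons_val_zero,
        Matrix.cons_val_one] <;>
      first
        | exact n1 hadj | exact n2 hadj | exact n1 hadj.symm | exact n2 hadj.symm
        | exact G.loopless _ hadj | exact hij1 (by rfl) | exact hji1 (by rfl)
  · intro i j h
    fin_cases i <;> fin_cases j <;> simp_all <;> rfl
  · intro i
    fin_cases i <;>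
      simp_all [show ((3:ZMod 4)+1) = 0 from by decide] <;>
      first | exact e4.symm | exact e1 | exact e2 | exact e3 | exact e4

private lemma notAdj_trans_aux
    (hmatroid : ∀ W : Finset V, PureOn G W) {a b c : V}
    (hab : a ≠ b) (hbc : b ≠ c) (hac : a ≠ c)
    (nab : ¬ G.Adj a b) (nbc : ¬ G.Adj b c) : ¬ G.Adj a c := by
  intro adj
  have h1 : IsMaxCliqueWithin G {a, b, c} {a, c} := by
    refine ⟨by intro x hx; simp at hx ⊢; tauto, ?_, ?_⟩
    · intro x hx y hy hxy
      simp at hx hy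
      rcases hx with rfl | rfl <;> rcases hy with rfl | rfl <;>
        first | exact absurd rfl hxy | exact adj | exact adj.symm
    · intro t htW htc hst
      apply Finset.Subset.antisymm hst
      intro x hx
      have hxW := htW hx
      simp at hxW ⊢
      rcases hxW with rfl | rfl | rfl
      · left; rfl
      · exfalso
        exact nab (htc (hst (by simp)) hx hab)
      · right; rfl
  have h2 : IsMaxCliqueWithin G {a, b, c} {b} := by
    refine ⟨by intro x hx; simp at hx ⊢; tauto, by simp, ?_⟩
    intro t htW htc hst
    apply Finset.Subset.antisymm hst
    intro x hx
    have hxW := htW hx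
    simp at hxW ⊢
    rcases hxW with rfl | rfl | rfl
    · exact absurd (htc hx (hst (by simp)) hab) nab
    · rfl
    · exact absurd (htc (hst (by simp)) hx hbc) nbc
  have := hmatroid {a, b, c} _ _ h1 h2
  rw [Finset.card_pair hac, Finset.card_singleton] at this
  omega

private lemma indep_threshold_aux :
    ∀ s : Finset V, s.Nonempty → (∀ a ∈ s, ∀ b ∈ s, a ≠ b → ¬ G.Adj a b) →
      IsThresholdOn G s := by
  intro s
  induction s using Finset.induction_on with
  | empty => intro h; exact absurd h (by simp)
  | @insert a s ha ih =>
    intro _ hindep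
    rcases s.eq_empty_or_nonempty with rfl | hne
    · exact IsThresholdOn.single a
    · exact IsThresholdOn.isolated s a ha
        (ih hne fun x hx y hy => hindep x (by simp [hx]) y (by simp [hy]))
        (fun u hu => hindep a (by simp) u (by simp [hu]) (fun h => ha (h ▸ hu)))

private lemma dom_extend_aux (s : Finset V)
    (hs : IsThresholdOn G s) :
    ∀ t : Finset V, Disjoint s t →
      (∀ v ∈ t, ∀ u ∈ s ∪ t, u ≠ v → G.Adj v u) → IsThresholdOn G (s ∪ t) := by
  intro t
  induction t using Finset.induction_on with
  | empty => intro _ _; simpa using hs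
  | @insert v t hv ih =>
    intro hdisj hdom
    have hvs : v ∉ s ∪ t := by
      simp only [Finset.mem_union, not_or]
      exact ⟨fun h => (Finset.disjoint_left.mp hdisj h) (by simp), hv⟩
    have : s ∪ insert v t = insert v (s ∪ t) := by
      ext x; simp [or_comm, or_left_comm]
    rw [this]
    refine IsThresholdOn.dominating _ v hvs
      (ih (hdisj.mono_right (by simp)) ?_) ?_
    · intro w hw u hu hne
      exact hdom w (by simp [hw]) u (by rcases Finset.mem_union.mp hu with h | h <;> simp [h]) hne
    · intro u hu
      exact hdom v (by simp) u
        (by rcases Finset.mem_union.mp hu with h | h <;> simp [h]) (fun h => hvs (h ▸ hu))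

end Aux

/-- If `G` is a chordal graph whose clique complex is a matroid complex (its restriction
to every subset of the vertex set is pure), then `G` is a threshold graph. -/
theorem stmt17 {V : Type} [Fintype V] [DecidableEq V] [Nonempty V] (G : SimpleGraph V)
    (hch : IsChordal G) (hmatroid : ∀ W : Finset V, PureOn G W) :
    IsThreshold G := by
  classical
  set S : Finset V := Finset.univ.filter (fun v => ∃ u, u ≠ v ∧ ¬ G.Adj v u) with hSdef
  have hdomS : ∀ v, v ∉ S → ∀ u, u ≠ v → G.Adj v u := by
    intro v hv u hu
    by_contra h
    exact hv (Finset.mem_filter.mpr ⟨Finset.mem_univ v, u, hu, h⟩)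
  have hSindep : ∀ a ∈ S, ∀ b ∈ S, a ≠ b → ¬ G.Adj a b := by
    intro a haS b hbS hab hadj
    obtain ⟨-, u, hua, nau⟩ := Finset.mem_filter.mp haS
    obtain ⟨-, u', hub, nbu'⟩ := Finset.mem_filter.mp hbS
    have hub2 : u ≠ b := fun h => nau (by rwa [h])
    have hua2 : u' ≠ a := fun h => nbu' (by rw [h]; exact hadj.symm)
    have huu' : u ≠ u' := by
      intro h
      subst h
      exact notAdj_trans_aux G hmatroid hua.symm hub hab nau
        (fun h2 => nbu' h2.symm) hadj
    have hau' : G.Adj a u' := by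
      by_contra nau'
      exact notAdj_trans_aux G hmatroid (fun h => hub h.symm) hua2 (fun h => hab h.symm)
        nbu' (fun h => nau' h.symm) hadj.symm
    have hbu : G.Adj b u := by
      by_contra nbu
      exact notAdj_trans_aux G hmatroid hua.symm hub2 hab nau (fun h => nbu h.symm) hadj
    have huu : G.Adj u u' := by
      by_contra nuu'
      exact notAdj_trans_aux G hmatroid hua.symm huu' (fun h => hua2 h.symm) nau nuu' hau'
    exact c4_aux G hch a b u u' hab (fun h => hua h.symm) (fun h => hua2 h.symm)
      (fun h => hub2 h.symm) (fun h => hub h.symm) huu'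
      hadj hbu huu hau'.symm nau nbu'
  show IsThresholdOn G Finset.univ
  rcases S.eq_empty_or_nonempty with hSe | hSne
  · obtain ⟨v₀⟩ := ‹Nonempty V›
    have h := dom_extend_aux G {v₀} (IsThresholdOn.single v₀) ({v₀}ᶜ)
      disjoint_compl_right ?_
    · rwa [Finset.union_compl] at h
    · intro v hv u hu hne
      refine hdomS v ?_ u hne
      rw [hSe]
      exact Finset.notMem_empty v
  · have h := dom_extend_aux G S (indep_threshold_aux G S hSne hSindep) Sᶜ
      disjoint_compl_right ?_
    · rwa [Finset.union_compl] at h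
    · intro v hv u hu hne
      exact hdomS v (Finset.mem_compl.mp hv) u hne
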